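/- Let v : ℝ^d → ℝ^d be dissipative (⟨v(a)−v(b), a−b⟩ ≤ 0 for all a, b) and H as above with γ > 0. Suppose X, Ỹ : [0,∞) → ℝ^d are continuous semimartingales with the same martingale part, satisfying dX(t) = v(X(t))dt + Z(X_t)dt + dW(t) and dỸ(t) = v(Ỹ(t))dt + Z(X_t)dt − γ H(Ỹ(t)−X(t))dt + dW(t). Then R(t) := X(t) − Ỹ(t) satisfies d|R(t)|²/dt ≤ −2γ |R(t)|^{1+ε} for almost every t ≥ 0; in particular t ↦ |R(t)| is nonincreasing. -/

import Mathlib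

open MeasureTheory

lemma coupling_key {d : ℕ} (ε γ : ℝ) (hε0 : 0 < ε) (hγ : 0 < γ)
    (v : EuclideanSpace ℝ (Fin d) → EuclideanSpace ℝ (Fin d))
    (hv : ∀ a b, (inner ℝ (v a - v b) (a - b) : ℝ) ≤ 0)
    (H : EuclideanSpace ℝ (Fin d) → EuclideanSpace ℝ (Fin d))
    (hH : ∀ x, x ≠ 0 → H x = (‖x‖ ^ (ε - 1)) • x) (hH0 : H 0 = 0)
    (X Y : ℝ → EuclideanSpace ℝ (Fin d))
    (hR : ∀ t, 0 ≤ t →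
      HasDerivAt (fun u => X u - Y u) (v (X t) - v (Y t) + γ • H (Y t - X t)) t) :
    ∀ t, 0 ≤ t → HasDerivAt (fun u => ‖X u - Y u‖ ^ 2)
      (2 * (inner ℝ (v (X t) - v (Y t) + γ • H (Y t - X t)) (X t - Y t) : ℝ)) t ∧
      2 * (inner ℝ (v (X t) - v (Y t) + γ • H (Y t - X t)) (X t - Y t) : ℝ)
        ≤ -2 * γ * ‖X t - Y t‖ ^ (1 + ε) := by
  intro t ht
  set R' := v (X t) - v (Y t) + γ • H (Y t - X t) with hR'def
  have hd := hR t ht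
  constructor
  · have h1 : HasDerivAt (fun u => (inner ℝ (X u - Y u) (X u - Y u) : ℝ))
        ((inner ℝ (X t - Y t) R' : ℝ) + (inner ℝ R' (X t - Y t) : ℝ)) t := hd.inner ℝ hd
    have h2 : (fun u => (inner ℝ (X u - Y u) (X u - Y u) : ℝ))
        = fun u => ‖X u - Y u‖ ^ 2 := by
      funext u; rw [real_inner_self_eq_norm_sq]
    rw [h2] at h1
    convert h1 using 1
    rw [real_inner_comm (X t - Y t) R']
    ring
  · have key : (inner ℝ R' (X t - Y t) : ℝ) ≤ -γ * ‖X t - Y t‖ ^ (1 + ε) := by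
      rw [hR'def, inner_add_left]
      have h1 := hv (X t) (Y t)
      have h2 : (inner ℝ (γ • H (Y t - X t)) (X t - Y t) : ℝ)
          = -γ * ‖X t - Y t‖ ^ (1 + ε) := by
        rw [real_inner_smul_left]
        by_cases h0 : Y t - X t = 0
        · have hxy : X t - Y t = 0 := by
            rw [← neg_sub] at h0; simpa using neg_eq_zero.mp h0
          rw [h0, hH0, inner_zero_left, hxy, norm_zero,
            Real.zero_rpow (by positivity)]
          ring
        · rw [hH _ h0, real_inner_smul_left]
          have hnorm : ‖Y t - X t‖ = ‖X t - Y t‖ := by rw [norm_sub_rev]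
          have hip : (inner ℝ (Y t - X t) (X t - Y t) : ℝ) = -‖X t - Y t‖ ^ 2 := by
            rw [← neg_sub (X t) (Y t), inner_neg_left, real_inner_self_eq_norm_sq]
          have hpos : 0 < ‖X t - Y t‖ := by
            rw [← hnorm]; exact norm_pos_iff.mpr h0
          rw [hip, hnorm]
          have : ‖X t - Y t‖ ^ (ε - 1) * ‖X t - Y t‖ ^ 2
              = ‖X t - Y t‖ ^ (1 + ε) := by
            rw [← Real.rpow_natCast (‖X t - Y t‖) 2, ← Real.rpow_add hpos]
            norm_num; ring_nf
          rw [mul_neg, this]; ring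
      linarith
    have hnn : 0 ≤ ‖X t - Y t‖ ^ (1 + ε) := Real.rpow_nonneg (norm_nonneg _) _
    nlinarith

/-- Pathwise coupling estimate: since both equations are driven by the same noise, the
difference `R = X − Ỹ` solves the ODE `R'(t) = v(X t) − v(Ỹ t) + γ H(Ỹ t − X t)`.
If `v` is dissipative, then `d‖R‖²/dt ≤ −2γ ‖R‖^{1+ε}`, and `t ↦ ‖R t‖` is nonincreasing
on `[0,∞)`. -/
theorem coupling_decay {d : ℕ} (ε γ : ℝ) (hε0 : 0 < ε) (hε1 : ε < 1) (hγ : 0 < γ)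
    (v : EuclideanSpace ℝ (Fin d) → EuclideanSpace ℝ (Fin d))
    (hv : ∀ a b, (inner ℝ (v a - v b) (a - b) : ℝ) ≤ 0)
    (H : EuclideanSpace ℝ (Fin d) → EuclideanSpace ℝ (Fin d))
    (hH : ∀ x, x ≠ 0 → H x = (‖x‖ ^ (ε - 1)) • x) (hH0 : H 0 = 0)
    (X Y : ℝ → EuclideanSpace ℝ (Fin d))
    (hR : ∀ t, 0 ≤ t →
      HasDerivAt (fun u => X u - Y u) (v (X t) - v (Y t) + γ • H (Y t - X t)) t) :
    (∀ t, 0 ≤ t → ∃ D : ℝ, HasDerivAt (fun u => ‖X u - Y u‖ ^ 2) D t ∧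
        D ≤ -2 * γ * ‖X t - Y t‖ ^ (1 + ε)) ∧
      AntitoneOn (fun t => ‖X t - Y t‖) (Set.Ici 0) := by
  have key := coupling_key ε γ hε0 hγ v hv H hH hH0 X Y hR
  refine ⟨fun t ht => ⟨_, (key t ht).1, (key t ht).2⟩, ?_⟩
  have hsq : AntitoneOn (fun t => ‖X t - Y t‖ ^ 2) (Set.Ici 0) := by
    apply antitoneOn_of_deriv_nonpos (convex_Ici 0)
    · intro t ht
      exact ((key t ht).1).continuousAt.continuousWithinAt
    · intro t ht
      rw [interior_Ici] at ht
      exact ((key t (le_of_lt ht)).1).differentiableAt.differentiableWithinAt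
    · intro t ht
      rw [interior_Ici] at ht
      have h := key t (le_of_lt ht)
      rw [h.1.deriv]
      have hnn : 0 ≤ ‖X t - Y t‖ ^ (1 + ε) := Real.rpow_nonneg (norm_nonneg _) _
      nlinarith [h.2]
  intro s hs t ht hst
  have := hsq hs ht hst
  simp only at this ⊢
  exact (pow_le_pow_iff_left₀ (norm_nonneg _) (norm_nonneg _) two_ne_zero).mp this
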